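/- Let R be a torsion-free commutative ring, n ≥ 1, and f(u) = Σ_{i≥1} a_i u^i ∈ R[[u]] with a_1 = n. Let g(u) = Σ_{i≥1} b_i u^i ∈ (R ⊗ ℤ[1/n])[[u]] be the compositional inverse of f. Then for every i ≥ 1, the element n^{i(i+1)/2} · b_i lies in the image of R in R ⊗ ℤ[1/n]. -/

import Mathlib

open PowerSeries

/-- Composition `f ∘ g` of formal power series, correct whenever `g` has zero
constant term: the `m`-th coefficient of `f(g(u))` is `∑_{k ≤ m} f_k · (g^k)_m`. -/
noncomputable def PowerSeries.comp' {R : Type*} [CommRing R] (f g : PowerSeries R) :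
    PowerSeries R :=
  PowerSeries.mk fun m => ∑ k ∈ Finset.range (m + 1),
    PowerSeries.coeff (R := R) k f * PowerSeries.coeff (R := R) m (g ^ k)

/-- Triangular numbers. -/
def triAux (m : ℕ) : ℕ := m * (m + 1) / 2

lemma two_triAux (m : ℕ) : 2 * triAux m = m * (m + 1) := by
  unfold triAux
  exact Nat.mul_div_cancel' (Nat.even_mul_succ_self m).two_dvd

lemma triAux_add (p q : ℕ) : triAux (p + q) = triAux p + triAux q + p * q := by
  have h := two_triAux (p + q)
  have hp := two_triAux p
  have hq := two_triAux q
  have h2 : 2 * triAux (p + q) = 2 * (triAux p + triAux q + p * q) := by nlinarith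
  omega

lemma triAux_ge (m : ℕ) : m ≤ triAux m := by
  have := two_triAux m
  nlinarith

/-- Auxiliary general form: in any commutative ring `A` with a subring `S`,
if `F` has coefficients in `S`, zero constant term, linear coefficient `ν ∈ S`,
and `g` with zero constant term satisfies `F ∘ g = X`, then
`ν^{i(i+1)/2} · gᵢ ∈ S` for all `i ≥ 1`. -/
lemma aux_denominator_bound {A : Type*} [CommRing A] (S : Subring A) (ν : A)
    (hν : ν ∈ S) (F g : PowerSeries A)
    (hFS : ∀ k : ℕ, PowerSeries.coeff (R := A) k F ∈ S)
    (hF0 : PowerSeries.coeff (R := A) 0 F = 0)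
    (hF1 : PowerSeries.coeff (R := A) 1 F = ν)
    (hg0 : PowerSeries.constantCoeff (R := A) g = 0)
    (hfg : PowerSeries.comp' F g = PowerSeries.X) :
    ∀ i : ℕ, 1 ≤ i → ν ^ (triAux i) * PowerSeries.coeff (R := A) i g ∈ S := by
  have hnpow : ∀ e : ℕ, ν ^ e ∈ S := fun e => S.pow_mem hν e
  -- vanishing of low coefficients of g^k
  have hgvan : ∀ k p : ℕ, p < k → PowerSeries.coeff (R := A) p (g ^ k) = 0 := by
    intro k p hpk
    have hXd : (PowerSeries.X : PowerSeries A) ∣ g := PowerSeries.X_dvd_iff.mpr hg0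
    exact PowerSeries.X_pow_dvd_iff.mp (pow_dvd_pow_of_dvd hXd k) p hpk
  -- Key lemma
  have key : ∀ k : ℕ, 1 ≤ k → ∀ m e : ℕ, k ≤ m → triAux m + 1 ≤ e + k →
      (∀ j : ℕ, 1 ≤ j → j + k ≤ m + 1 →
        ν ^ (triAux j) * PowerSeries.coeff (R := A) j g ∈ S) →
      ν ^ e * PowerSeries.coeff (R := A) m (g ^ k) ∈ S := by
    intro k
    induction k with
    | zero => intro h; omega
    | succ k ih =>
      intro _ m e hkm he hyp
      rcases Nat.eq_zero_or_pos k with hk0 | hk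
      · -- base case k+1 = 1
        subst hk0
        rw [pow_one]
        have hm := hyp m (by omega) (by omega)
        have hle : triAux m ≤ e := by omega
        have hsp : ν ^ e = ν ^ (e - triAux m) * ν ^ (triAux m) := by
          rw [← pow_add]; congr 1; omega
        rw [hsp, mul_assoc]
        exact S.mul_mem (hnpow _) hm
      · -- inductive step
        rw [pow_succ, PowerSeries.coeff_mul, Finset.mul_sum]
        apply S.sum_mem
        rintro ⟨p, q⟩ hpq
        replace hpq : p + q = m := Finset.HasAntidiagonal.mem_antidiagonal.mp hpq
        simp only at hpq ⊢
        rcases Nat.eq_zero_or_pos q with hq0 | hq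
        · have h0 : PowerSeries.coeff (R := A) q g = 0 := by
            subst hq0; simpa using hg0
          rw [h0, mul_zero, mul_zero]
          exact S.zero_mem
        rcases Nat.lt_or_ge p k with hpk | hpk
        · rw [hgvan k p hpk, zero_mul, mul_zero]
          exact S.zero_mem
        -- now p ≥ k ≥ 1, q ≥ 1
        have htm : triAux m = triAux p + triAux q + p * q := by
          rw [← hpq]; exact triAux_add p q
        have hpq1 : 1 ≤ p * q := Nat.one_le_iff_ne_zero.mpr
          (Nat.mul_ne_zero (by omega) (by omega))
        have htpp : p ≤ triAux p := triAux_ge p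
        have hetq : triAux q ≤ e := by omega
        have hsplit : ν ^ e = ν ^ (e - triAux q) * ν ^ (triAux q) := by
          rw [← pow_add]; congr 1; omega
        have hterm : ν ^ e * (PowerSeries.coeff (R := A) p (g ^ k) *
            PowerSeries.coeff (R := A) q g) =
            (ν ^ (e - triAux q) * PowerSeries.coeff (R := A) p (g ^ k)) *
            (ν ^ (triAux q) * PowerSeries.coeff (R := A) q g) := by
          rw [hsplit]; ring
        rw [hterm]
        apply S.mul_mem
        · apply ih hk p (e - triAux q) hpk (by omega)
          intro j hj hjk
          exact hyp j hj (by omega)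
        · exact hyp q (by omega) (by omega)
  -- Main statement via strong induction
  intro m
  induction m using Nat.strong_induction_on with
  | _ m IH =>
  intro hm
  -- extract the coefficient equation at m
  have heq : ∑ k ∈ Finset.range (m + 1),
      PowerSeries.coeff (R := A) k F * PowerSeries.coeff (R := A) m (g ^ k) =
        PowerSeries.coeff (R := A) m PowerSeries.X := by
    conv_rhs => rw [← hfg]
    rw [PowerSeries.comp', PowerSeries.coeff_mk]
  rcases Nat.eq_or_lt_of_le hm with hm1 | hm2
  · -- m = 1
    have hm1 : m = 1 := hm1.symm
    subst hm1
    rw [Finset.sum_range_succ, Finset.sum_range_one, pow_zero, pow_one] at heq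
    have h10 : PowerSeries.coeff (R := A) 1 (1 : PowerSeries A) = 0 := by
      simp [PowerSeries.coeff_one]
    rw [h10, mul_zero, zero_add, hF1, PowerSeries.coeff_X, if_pos rfl] at heq
    have ht1 : triAux 1 = 1 := rfl
    rw [ht1, pow_one, heq]
    exact S.one_mem
  · -- m ≥ 2
    have hmx : PowerSeries.coeff (R := A) m (PowerSeries.X : PowerSeries A) = 0 := by
      rw [PowerSeries.coeff_X, if_neg (by omega)]
    rw [hmx] at heq
    have h1mem : (1 : ℕ) ∈ Finset.range (m + 1) := Finset.mem_range.mpr (by omega)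
    have hsplit := Finset.add_sum_erase (Finset.range (m + 1))
      (fun k => PowerSeries.coeff (R := A) k F * PowerSeries.coeff (R := A) m (g ^ k)) h1mem
    rw [heq] at hsplit
    have hone : PowerSeries.coeff (R := A) 1 F * PowerSeries.coeff (R := A) m (g ^ 1) =
        ν * PowerSeries.coeff (R := A) m g := by rw [hF1, pow_one]
    have hmain : ν * PowerSeries.coeff (R := A) m g =
        -∑ k ∈ (Finset.range (m + 1)).erase 1,
          (PowerSeries.coeff (R := A) k F * PowerSeries.coeff (R := A) m (g ^ k)) := by
      rw [← hone]
      exact eq_neg_of_add_eq_zero_left hsplit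
    have htm1 : 1 ≤ triAux m := le_trans hm (triAux_ge m)
    have hms : ν ^ (triAux m) = ν ^ (triAux m - 1) * ν := by
      rw [← pow_succ]; congr 1; omega
    have hkey : ν ^ (triAux m) * PowerSeries.coeff (R := A) m g =
        ∑ k ∈ (Finset.range (m + 1)).erase 1,
          (-(ν ^ (triAux m - 1) *
            (PowerSeries.coeff (R := A) k F * PowerSeries.coeff (R := A) m (g ^ k)))) := by
      rw [hms, mul_assoc, hmain, mul_neg, Finset.mul_sum, ← Finset.sum_neg_distrib]
    rw [hkey]
    apply S.sum_mem
    intro k hk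
    have hk1 : k ≠ 1 := (Finset.mem_erase.mp hk).1
    have hkm : k < m + 1 := Finset.mem_range.mp (Finset.mem_erase.mp hk).2
    apply S.neg_mem
    rcases Nat.eq_zero_or_pos k with hk0 | hkpos
    · subst hk0
      rw [hF0, zero_mul, mul_zero]
      exact S.zero_mem
    have hk2 : 2 ≤ k := by omega
    have hmem2 : ν ^ (triAux m - 1) * PowerSeries.coeff (R := A) m (g ^ k) ∈ S := by
      apply key k (by omega) m (triAux m - 1) (by omega) (by omega)
      intro j hj hjk
      exact IH j (by omega) hj
    have hre : ν ^ (triAux m - 1) *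
        (PowerSeries.coeff (R := A) k F * PowerSeries.coeff (R := A) m (g ^ k)) =
        PowerSeries.coeff (R := A) k F *
          (ν ^ (triAux m - 1) * PowerSeries.coeff (R := A) m (g ^ k)) := by ring
    rw [hre]
    exact S.mul_mem (hFS k) hmem2

/-- Let `R` be a torsion-free commutative ring, `n ≥ 1`, and
`f(u) = ∑_{i ≥ 1} a_i u^i ∈ R⟦u⟧` with `a₁ = n`.  If `g(u) = ∑_{i ≥ 1} b_i u^i`
is the compositional inverse of `f` over `R ⊗ ℤ[1/n]` (the localization of `R`
away from `n`), then for every `i ≥ 1` the element `n^{i(i+1)/2} · b_i` lies in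
the image of `R` in `R ⊗ ℤ[1/n]`. -/
theorem stmt3_denominator_bound_for_inverse_coefficients
    (R : Type*) [CommRing R] [NoZeroSMulDivisors ℤ R]
    (n : ℕ) (hn : 1 ≤ n) (f : PowerSeries R)
    (hf0 : PowerSeries.constantCoeff (R := R) f = 0)
    (hf1 : PowerSeries.coeff (R := R) 1 f = (n : R))
    (g : PowerSeries (Localization.Away (n : R)))
    (hg0 : PowerSeries.constantCoeff (R := (Localization.Away (n : R))) g = 0)
    (hfg : PowerSeries.comp'
      (PowerSeries.map (algebraMap R (Localization.Away (n : R))) f) g = PowerSeries.X)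
    (hgf : PowerSeries.comp' g
      (PowerSeries.map (algebraMap R (Localization.Away (n : R))) f) = PowerSeries.X) :
    ∀ i : ℕ, 1 ≤ i → ∃ r : R,
      algebraMap R (Localization.Away (n : R)) r =
        (n : Localization.Away (n : R)) ^ (i * (i + 1) / 2) *
          PowerSeries.coeff (R := (Localization.Away (n : R))) i g := by
  intro i hi
  have h := aux_denominator_bound
    ((algebraMap R (Localization.Away (n : R))).range)
    (n : Localization.Away (n : R))
    ⟨(n : R), by simp⟩
    (PowerSeries.map (algebraMap R (Localization.Away (n : R))) f) g
    (fun k => ⟨PowerSeries.coeff (R := R) k f, by rw [PowerSeries.coeff_map]⟩)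
    (by rw [PowerSeries.coeff_map, ← PowerSeries.coeff_zero_eq_constantCoeff_apply] at *
        rw [show PowerSeries.coeff (R := R) 0 f = 0 from hf0, map_zero])
    (by rw [PowerSeries.coeff_map, hf1, map_natCast])
    hg0 hfg i hi
  obtain ⟨r, hr⟩ := h
  exact ⟨r, hr⟩
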